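/- Suppose the entire function φ satisfies |φ(z)| ≤ C₁(1+|z|)e^{−π√|z|} on the real axis outside the union of the disks {|z − k²| < 3d₀} ∪ {|z + k²| < 3d₀} (k ∈ ℕ), and |φ(z)| ≤ C₂(1+|z|) e^{−π√|z|(|sin(θ/2)| + |cos(θ/2)|)} on the boundary circles of these disks (z = |z|e^{iθ}), where d₀ ∈ (0, 1/12). Then there is a constant C depending only on C₁, C₂, d₀ such that |φ(x)| ≤ C (1+|x|) e^{−π√|x|} for all real x. -/

import Mathlib

open Complex Real

lemma sqrt_subadd (a b : ℝ) (ha : 0 ≤ a) (hb : 0 ≤ b) :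
    Real.sqrt (a + b) ≤ Real.sqrt a + Real.sqrt b := by
  rw [← Real.sqrt_sq (by positivity : (0:ℝ) ≤ Real.sqrt a + Real.sqrt b)]
  apply Real.sqrt_le_sqrt
  have h1 := Real.sq_sqrt ha
  have h2 := Real.sq_sqrt hb
  nlinarith [Real.sqrt_nonneg a, Real.sqrt_nonneg b]

lemma disk_bound (d₀ C₂ : ℝ) (hd1 : 0 < d₀) (hd2 : d₀ < 1/12) (hC₂ : 0 < C₂)
    (φ : ℂ → ℂ) (hφ : Differentiable ℂ φ) (c x : ℝ)
    (hx : |x - c| < 3 * d₀)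
    (hb : ∀ z : ℂ, ‖z - (c : ℂ)‖ = 3 * d₀ →
      ‖φ z‖ ≤ C₂ * (1 + ‖z‖) *
        Real.exp (-Real.pi * Real.sqrt (‖z‖))) :
    ‖φ (x : ℂ)‖ ≤
      2 * Real.exp Real.pi * C₂ * (1 + |x|) * Real.exp (-Real.pi * Real.sqrt |x|) := by
  have hr : (0:ℝ) < 3 * d₀ := by linarith
  have := Complex.norm_le_of_forall_mem_frontier_norm_le
    (U := Metric.ball ((c : ℝ) : ℂ) (3 * d₀)) Metric.isBounded_ball
    (hφ.diffContOnCl)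
    (C := 2 * Real.exp Real.pi * C₂ * (1 + |x|) * Real.exp (-Real.pi * Real.sqrt |x|))
    (fun z hz => ?_) (z := (x : ℂ)) ?_
  · exact this
  · -- frontier estimate
    rw [frontier_ball _ (ne_of_gt hr)] at hz
    have hz' : ‖z - (c : ℂ)‖ = 3 * d₀ := by
      rw [Metric.mem_sphere] at hz
      rwa [Complex.dist_eq] at hz
    refine (hb z hz').trans ?_
    -- estimates relating |z| and |x|
    have habs : ‖((c : ℝ) : ℂ)‖ = |c| := by rw [Complex.norm_real, Real.norm_eq_abs]
    have h1 : ‖z‖ ≤ |x| + 6 * d₀ := by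
      have t1 := norm_add_le (z - (c : ℂ)) ((c : ℝ) : ℂ)
      rw [sub_add_cancel, hz', habs] at t1
      have t2 : |c| - |x| ≤ |c - x| := abs_sub_abs_le_abs_sub c x
      rw [abs_sub_comm] at t2
      linarith
    have h2 : |x| - 6 * d₀ ≤ ‖z‖ := by
      have t1 : |x| - |c| ≤ |x - c| := abs_sub_abs_le_abs_sub x c
      have t2 := norm_add_le (((c:ℝ):ℂ) - z) z
      rw [sub_add_cancel, habs, norm_sub_rev, hz'] at t2
      linarith
    have hxz : |x| ≤ ‖z‖ + 6 * d₀ := by linarith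
    have hsqrt : Real.sqrt |x| ≤ Real.sqrt (‖z‖) + 1 := by
      have s1 : Real.sqrt |x| ≤ Real.sqrt (‖z‖ + 6 * d₀) :=
        Real.sqrt_le_sqrt hxz
      have s2 : Real.sqrt (‖z‖ + 6 * d₀) ≤
          Real.sqrt (‖z‖) + Real.sqrt (6 * d₀) :=
        sqrt_subadd _ _ (norm_nonneg z) (by linarith)
      have s3 : Real.sqrt (6 * d₀) ≤ 1 := by
        rw [show (1:ℝ) = Real.sqrt 1 by simp]
        exact Real.sqrt_le_sqrt (by linarith)
      linarith
    have hexp : Real.exp (-Real.pi * Real.sqrt (‖z‖)) ≤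
        Real.exp Real.pi * Real.exp (-Real.pi * Real.sqrt |x|) := by
      rw [← Real.exp_add]
      apply Real.exp_le_exp.mpr
      nlinarith [Real.pi_pos]
    have hone : 1 + ‖z‖ ≤ 2 * (1 + |x|) := by
      have := abs_nonneg x
      linarith
    calc C₂ * (1 + ‖z‖) * Real.exp (-Real.pi * Real.sqrt (‖z‖))
        ≤ C₂ * (2 * (1 + |x|)) * (Real.exp Real.pi * Real.exp (-Real.pi * Real.sqrt |x|)) := by
          apply mul_le_mul (mul_le_mul le_rfl hone (by positivity) hC₂.le) hexp
            (Real.exp_pos _).le (by positivity)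
      _ = 2 * Real.exp Real.pi * C₂ * (1 + |x|) * Real.exp (-Real.pi * Real.sqrt |x|) := by
          ring
  · -- membership
    apply subset_closure
    rw [Metric.mem_ball, Complex.dist_eq]
    rw [show ((x:ℂ) - (c:ℂ)) = (((x - c : ℝ)) : ℂ) by push_cast; ring]
    rwa [Complex.norm_real, Real.norm_eq_abs]

/-- If an entire `φ` satisfies `|φ| ≤ C₁(1+|z|)e^{−π√|z|}` on the real axis outside the disks
of radius `3d₀` around `±k²` (`k ∈ ℕ, k ≥ 1`), and
`|φ(z)| ≤ C₂(1+|z|)e^{−π√|z|(|sin(θ/2)|+|cos(θ/2)|)}` on the boundary circles of these disks,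
then `|φ(x)| ≤ C(1+|x|)e^{−π√|x|}` on the whole real axis. -/
theorem max_modulus_patch (d₀ C₁ C₂ : ℝ) (hd₀ : d₀ ∈ Set.Ioo (0 : ℝ) (1/12))
    (hC₁ : 0 < C₁) (hC₂ : 0 < C₂) (φ : ℂ → ℂ) (hφ : Differentiable ℂ φ)
    (hreal : ∀ x : ℝ,
      (∀ k : ℕ, 1 ≤ k → 3 * d₀ ≤ ‖(x : ℂ) - (k : ℂ) ^ 2‖ ∧
        3 * d₀ ≤ ‖(x : ℂ) + (k : ℂ) ^ 2‖) →
      ‖φ (x : ℂ)‖ ≤ C₁ * (1 + |x|) * Real.exp (-Real.pi * Real.sqrt |x|))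
    (hcircle : ∀ z : ℂ,
      (∃ k : ℕ, 1 ≤ k ∧ (‖z - (k : ℂ) ^ 2‖ = 3 * d₀ ∨
        ‖z + (k : ℂ) ^ 2‖ = 3 * d₀)) →
      ‖φ z‖ ≤ C₂ * (1 + ‖z‖) *
        Real.exp (-Real.pi * Real.sqrt (‖z‖) *
          (|Real.sin (z.arg / 2)| + |Real.cos (z.arg / 2)|))) :
    ∃ C : ℝ, 0 < C ∧ ∀ x : ℝ,
      ‖φ (x : ℂ)‖ ≤ C * (1 + |x|) * Real.exp (-Real.pi * Real.sqrt |x|) := by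
  obtain ⟨hd1, hd2⟩ := hd₀
  -- the boundary bound simplifies using |sin|+|cos| ≥ 1
  have hcircle' : ∀ z : ℂ,
      (∃ k : ℕ, 1 ≤ k ∧ (‖z - (k : ℂ) ^ 2‖ = 3 * d₀ ∨
        ‖z + (k : ℂ) ^ 2‖ = 3 * d₀)) →
      ‖φ z‖ ≤ C₂ * (1 + ‖z‖) *
        Real.exp (-Real.pi * Real.sqrt (‖z‖)) := by
    intro z hz
    refine (hcircle z hz).trans ?_
    have hsc : 1 ≤ |Real.sin (z.arg / 2)| + |Real.cos (z.arg / 2)| := by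
      have h1 := Real.sin_sq_add_cos_sq (z.arg / 2)
      have h2 : |Real.sin (z.arg / 2)| ≤ 1 := Real.abs_sin_le_one _
      have h3 : |Real.cos (z.arg / 2)| ≤ 1 := Real.abs_cos_le_one _
      nlinarith [_root_.sq_abs (Real.sin (z.arg / 2)), _root_.sq_abs (Real.cos (z.arg / 2)),
        abs_nonneg (Real.sin (z.arg / 2)), abs_nonneg (Real.cos (z.arg / 2))]
    apply mul_le_mul le_rfl ?_ (Real.exp_pos _).le (by positivity)
    apply Real.exp_le_exp.mpr
    nlinarith [mul_nonneg (mul_nonneg Real.pi_pos.le (Real.sqrt_nonneg (‖z‖)))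
      (sub_nonneg.mpr hsc)]
  refine ⟨C₁ + 2 * Real.exp Real.pi * C₂, by positivity, fun x => ?_⟩
  have hCnn : 0 ≤ (1 + |x|) * Real.exp (-Real.pi * Real.sqrt |x|) := by positivity
  by_cases h : ∀ k : ℕ, 1 ≤ k → 3 * d₀ ≤ ‖(x : ℂ) - (k : ℂ) ^ 2‖ ∧
      3 * d₀ ≤ ‖(x : ℂ) + (k : ℂ) ^ 2‖
  · have := hreal x h
    have h2 : 0 < 2 * Real.exp Real.pi * C₂ := by positivity
    nlinarith
  · push_neg at h
    obtain ⟨k, hk, hcase⟩ := h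
    have hlt : ‖(x : ℂ) - (k : ℂ) ^ 2‖ < 3 * d₀ ∨
        ‖(x : ℂ) + (k : ℂ) ^ 2‖ < 3 * d₀ := by
      rcases le_or_gt (3 * d₀) (‖(x : ℂ) - (k : ℂ) ^ 2‖) with h' | h'
      · exact Or.inr (hcase h')
      · exact Or.inl h'
    have key : ‖φ (x : ℂ)‖ ≤
        2 * Real.exp Real.pi * C₂ * (1 + |x|) * Real.exp (-Real.pi * Real.sqrt |x|) := by
      rcases hlt with hlt | hlt
      · apply disk_bound d₀ C₂ hd1 hd2 hC₂ φ hφ ((k:ℝ)^2) x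
        · have : ((x : ℂ) - (k : ℂ) ^ 2) = (((x - (k:ℝ)^2 : ℝ)) : ℂ) := by push_cast; ring
          rw [this, Complex.norm_real, Real.norm_eq_abs] at hlt
          exact hlt
        · intro z hzeq
          apply hcircle' z
          refine ⟨k, hk, Or.inl ?_⟩
          rw [show (z - ((k:ℂ))^2) = z - ((((k:ℝ)^2 : ℝ)) : ℂ) by push_cast; ring]
          exact hzeq
      · apply disk_bound d₀ C₂ hd1 hd2 hC₂ φ hφ (-(k:ℝ)^2) x
        · have : ((x : ℂ) + (k : ℂ) ^ 2) = (((x - (-(k:ℝ)^2) : ℝ)) : ℂ) := by push_cast; ring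
          rw [this, Complex.norm_real, Real.norm_eq_abs] at hlt
          exact hlt
        · intro z hzeq
          apply hcircle' z
          refine ⟨k, hk, Or.inr ?_⟩
          rw [show (z + ((k:ℂ))^2) = z - (((-(k:ℝ)^2 : ℝ)) : ℂ) by push_cast; ring]
          exact hzeq
    have h1 : 0 < C₁ := hC₁
    nlinarith
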